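/- Every regular T1 one-point extension of an rc-space is completely regular. -/

import Mathlib

set_option linter.unusedSectionVars false

open Set Filter TopologicalSpace Topology

namespace OnePointRC

variable {Y : Type*} [TopologicalSpace Y]



/-- The closure of an open set is regular closed. -/
lemma rc_closure_open {U : Set Y} (hU : IsOpen U) :
    closure U = closure (interior (closure U)) := by
  apply subset_antisymm
  · exact closure_mono (interior_maximal subset_closure hU)
  · exact closure_minimal interior_subset isClosed_closure

lemma isClosed_of_rc {F : Set Y} (hF : F = closure (interior F)) : IsClosed F := by
  rw [hF]; exact isClosed_closure

lemma isOpen_of_ro {U : Set Y} (hU : U = interior (closure U)) : IsOpen U := by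
  rw [hU]; exact isOpen_interior

/-- The complement of a regular open set is regular closed. -/
lemma rc_compl_ro {U : Set Y} (hU : U = interior (closure U)) :
    Uᶜ = closure (interior Uᶜ) := by
  rw [interior_compl, closure_compl]
  exact congrArg compl hU

/-- The complement of a regular closed set is regular open. -/
lemma ro_compl_rc {G : Set Y} (hG : G = closure (interior G)) :
    Gᶜ = interior (closure Gᶜ) := by
  rw [closure_compl, interior_compl]
  exact congrArg compl hG




/-- A variant of `Urysohns.CU` where the inner set is regular closed and the outer set is
regular open, and where the interpolation property is restricted to such pairs. -/
structure RCU (Y : Type*) [TopologicalSpace Y] where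
  protected C : Set Y
  protected U : Set Y
  protected rc_C : C = closure (interior C)
  protected ro_U : U = interior (closure U)
  protected subset : C ⊆ U
  protected hP : ∀ {c u : Set Y}, c = closure (interior c) → u = interior (closure u) → c ⊆ u →
    ∃ v, v = interior (closure v) ∧ c ⊆ v ∧ closure v ⊆ u ∧
      closure v = closure (interior (closure v))

namespace RCU

lemma isClosed_of_rc' {F : Set Y} (hF : F = closure (interior F)) : IsClosed F := by
  rw [hF]; exact isClosed_closure

protected lemma closed_C (c : RCU Y) : IsClosed c.C := by
  rw [c.rc_C]; exact isClosed_closure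

protected lemma open_U (c : RCU Y) : IsOpen c.U := by
  rw [c.ro_U]; exact isOpen_interior

/-- the left half of an `RCU`. -/
@[simps C]
def left (c : RCU Y) : RCU Y where
  C := c.C
  U := (c.hP c.rc_C c.ro_U c.subset).choose
  rc_C := c.rc_C
  ro_U := (c.hP c.rc_C c.ro_U c.subset).choose_spec.1
  subset := (c.hP c.rc_C c.ro_U c.subset).choose_spec.2.1
  hP := c.hP

/-- the right half of an `RCU`. -/
@[simps U]
def right (c : RCU Y) : RCU Y where
  C := closure (c.hP c.rc_C c.ro_U c.subset).choose
  U := c.U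
  rc_C := (c.hP c.rc_C c.ro_U c.subset).choose_spec.2.2.2
  ro_U := c.ro_U
  subset := (c.hP c.rc_C c.ro_U c.subset).choose_spec.2.2.1
  hP := c.hP

theorem left_U_subset_right_C (c : RCU Y) : c.left.U ⊆ c.right.C :=
  subset_closure

theorem left_U_subset (c : RCU Y) : c.left.U ⊆ c.U :=
  Subset.trans c.left_U_subset_right_C c.right.subset

theorem subset_right_C (c : RCU Y) : c.C ⊆ c.right.C :=
  Subset.trans c.left.subset c.left_U_subset_right_C

/-- `n`-th approximation. -/
noncomputable def approx : ℕ → RCU Y → Y → ℝ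
  | 0, c, x => indicator c.Uᶜ 1 x
  | n + 1, c, x => midpoint ℝ (approx n c.left x) (approx n c.right x)

theorem approx_of_mem_C (c : RCU Y) (n : ℕ) {x : Y} (hx : x ∈ c.C) : c.approx n x = 0 := by
  induction n generalizing c with
  | zero => exact indicator_of_notMem (fun (hU : x ∈ c.Uᶜ) => hU <| c.subset hx) _
  | succ n ihn =>
    simp only [approx]
    rw [ihn, ihn, midpoint_self]
    exacts [c.subset_right_C hx, hx]

theorem approx_of_nmem_U (c : RCU Y) (n : ℕ) {x : Y} (hx : x ∉ c.U) : c.approx n x = 1 := by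
  induction n generalizing c with
  | zero =>
    rw [← mem_compl_iff] at hx
    exact indicator_of_mem hx _
  | succ n ihn =>
    simp only [approx]
    rw [ihn, ihn, midpoint_self]
    exacts [hx, fun hU => hx <| c.left_U_subset hU]

theorem approx_nonneg (c : RCU Y) (n : ℕ) (x : Y) : 0 ≤ c.approx n x := by
  induction n generalizing c with
  | zero => exact indicator_nonneg (fun _ _ => zero_le_one) _
  | succ n ihn =>
    simp only [approx, midpoint_eq_smul_add, invOf_eq_inv]
    refine mul_nonneg (inv_nonneg.2 zero_le_two) (add_nonneg ?_ ?_) <;> apply ihn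

theorem approx_le_one (c : RCU Y) (n : ℕ) (x : Y) : c.approx n x ≤ 1 := by
  induction n generalizing c with
  | zero => exact indicator_apply_le' (fun _ => le_rfl) fun _ => zero_le_one
  | succ n ihn =>
    simp only [approx, midpoint_eq_smul_add, invOf_eq_inv, smul_eq_mul, ← div_eq_inv_mul]
    have := add_le_add (ihn (left c)) (ihn (right c))
    norm_num at this
    exact Iff.mpr (div_le_one zero_lt_two) this

theorem bddAbove_range_approx (c : RCU Y) (x : Y) : BddAbove (range fun n => c.approx n x) :=
  ⟨1, fun _ ⟨n, hn⟩ => hn ▸ c.approx_le_one n x⟩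

theorem approx_le_approx_of_U_sub_C {c₁ c₂ : RCU Y} (h : c₁.U ⊆ c₂.C) (n₁ n₂ : ℕ) (x : Y) :
    c₂.approx n₂ x ≤ c₁.approx n₁ x := by
  by_cases hx : x ∈ c₁.U
  · calc
      approx n₂ c₂ x = 0 := approx_of_mem_C _ _ (h hx)
      _ ≤ approx n₁ c₁ x := approx_nonneg _ _ _
  · calc
      approx n₂ c₂ x ≤ 1 := approx_le_one _ _ _
      _ = approx n₁ c₁ x := (approx_of_nmem_U _ _ hx).symm

theorem approx_mem_Icc_right_left (c : RCU Y) (n : ℕ) (x : Y) :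
    c.approx n x ∈ Icc (c.right.approx n x) (c.left.approx n x) := by
  induction' n with n ihn generalizing c
  · exact ⟨le_rfl, indicator_le_indicator_of_subset (compl_subset_compl.2 c.left_U_subset)
      (fun _ => zero_le_one) _⟩
  · simp only [approx, mem_Icc]
    refine ⟨midpoint_le_midpoint ?_ (ihn _).1, midpoint_le_midpoint (ihn _).2 ?_⟩ <;>
      apply approx_le_approx_of_U_sub_C
    exacts [subset_closure, subset_closure]

theorem approx_le_succ (c : RCU Y) (n : ℕ) (x : Y) : c.approx n x ≤ c.approx (n + 1) x := by
  induction' n with n ihn generalizing c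
  · simp only [approx, right_U, right_le_midpoint]
    exact (approx_mem_Icc_right_left c 0 x).2
  · rw [approx, approx]
    exact midpoint_le_midpoint (ihn _) (ihn _)

theorem approx_mono (c : RCU Y) (x : Y) : Monotone fun n => c.approx n x :=
  monotone_nat_of_le_succ fun n => c.approx_le_succ n x

/-- The limit function. -/
protected noncomputable def lim (c : RCU Y) (x : Y) : ℝ :=
  ⨆ n, c.approx n x

theorem tendsto_approx_atTop (c : RCU Y) (x : Y) :
    Tendsto (fun n => c.approx n x) atTop (𝓝 <| c.lim x) :=
  tendsto_atTop_ciSup (c.approx_mono x) ⟨1, fun _ ⟨_, hn⟩ => hn ▸ c.approx_le_one _ _⟩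

theorem lim_of_mem_C (c : RCU Y) (x : Y) (h : x ∈ c.C) : c.lim x = 0 := by
  simp only [RCU.lim, approx_of_mem_C, h, ciSup_const]

theorem lim_of_nmem_U (c : RCU Y) (x : Y) (h : x ∉ c.U) : c.lim x = 1 := by
  simp only [RCU.lim, approx_of_nmem_U c _ h, ciSup_const]

theorem lim_eq_midpoint (c : RCU Y) (x : Y) :
    c.lim x = midpoint ℝ (c.left.lim x) (c.right.lim x) := by
  refine tendsto_nhds_unique (c.tendsto_approx_atTop x) ((tendsto_add_atTop_iff_nat 1).1 ?_)
  simp only [approx]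
  exact (c.left.tendsto_approx_atTop x).midpoint (c.right.tendsto_approx_atTop x)

theorem approx_le_lim (c : RCU Y) (x : Y) (n : ℕ) : c.approx n x ≤ c.lim x :=
  le_ciSup (c.bddAbove_range_approx x) _

theorem lim_nonneg (c : RCU Y) (x : Y) : 0 ≤ c.lim x :=
  (c.approx_nonneg 0 x).trans (c.approx_le_lim x 0)

theorem lim_le_one (c : RCU Y) (x : Y) : c.lim x ≤ 1 :=
  ciSup_le fun _ => c.approx_le_one _ _

theorem lim_mem_Icc (c : RCU Y) (x : Y) : c.lim x ∈ Icc (0 : ℝ) 1 :=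
  ⟨c.lim_nonneg x, c.lim_le_one x⟩

/-- Continuity of `RCU.lim`. -/
theorem continuous_lim (c : RCU Y) : Continuous c.lim := by
  obtain ⟨h0, h1234, h1⟩ : 0 < (2⁻¹ : ℝ) ∧ (2⁻¹ : ℝ) < 3 / 4 ∧ (3 / 4 : ℝ) < 1 := by norm_num
  refine
    continuous_iff_continuousAt.2 fun x =>
      (Metric.nhds_basis_closedBall_pow (h0.trans h1234) h1).tendsto_right_iff.2 fun n _ => ?_
  simp only [Metric.mem_closedBall]
  induction' n with n ihn generalizing c
  · filter_upwards with y
    rw [pow_zero]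
    exact Real.dist_le_of_mem_Icc_01 (c.lim_mem_Icc _) (c.lim_mem_Icc _)
  · by_cases hxl : x ∈ c.left.U
    · filter_upwards [IsOpen.mem_nhds c.left.open_U hxl, ihn c.left] with _ hyl hyd
      rw [pow_succ', c.lim_eq_midpoint, c.lim_eq_midpoint,
        c.right.lim_of_mem_C _ (c.left_U_subset_right_C hyl),
        c.right.lim_of_mem_C _ (c.left_U_subset_right_C hxl)]
      refine (dist_midpoint_midpoint_le _ _ _ _).trans ?_
      rw [dist_self, add_zero, div_eq_inv_mul]
      gcongr
    · replace hxl : x ∈ c.left.right.Cᶜ :=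
        compl_subset_compl.2 c.left.right.subset hxl
      filter_upwards [IsOpen.mem_nhds (isOpen_compl_iff.2 c.left.right.closed_C) hxl,
        ihn c.left.right, ihn c.right] with y hyl hydl hydr
      replace hxl : x ∉ c.left.left.U :=
        compl_subset_compl.2 c.left.left_U_subset_right_C hxl
      replace hyl : y ∉ c.left.left.U :=
        compl_subset_compl.2 c.left.left_U_subset_right_C hyl
      simp only [pow_succ, c.lim_eq_midpoint, c.left.lim_eq_midpoint,
        c.left.left.lim_of_nmem_U _ hxl, c.left.left.lim_of_nmem_U _ hyl]
      refine (dist_midpoint_midpoint_le _ _ _ _).trans ?_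
      refine (div_le_div_of_nonneg_right (add_le_add_left (dist_midpoint_midpoint_le _ _ _ _) _)
        zero_le_two).trans ?_
      rw [dist_self, zero_add]
      set r := (3 / 4 : ℝ) ^ n
      calc _ ≤ (r / 2 + r) / 2 := by gcongr
        _ = _ := by field_simp; ring

end RCU




section Sep

variable [T1Space Y] [RegularSpace Y] {p : Y}

/-- Separation of disjoint regular closed sets avoiding `p`, via the rc-property of the
subspace `Y \ {p}`. -/
lemma sep_away
    (hrc : ∀ F G : Set {y : Y // y ≠ p},
      F = closure (interior F) → G = closure (interior G) → Disjoint F G →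
      ∃ U V : Set {y : Y // y ≠ p},
        IsOpen U ∧ IsOpen V ∧ F ⊆ U ∧ G ⊆ V ∧ Disjoint U V)
    {F G : Set Y} (hF : F = closure (interior F)) (hG : G = closure (interior G))
    (hFp : p ∉ F) (hGp : p ∉ G) (hd : Disjoint F G) :
    ∃ U V : Set Y, IsOpen U ∧ IsOpen V ∧ F ⊆ U ∧ G ⊆ V ∧ Disjoint U V := by
  have hs : IsOpen {y : Y | y ≠ p} := isOpen_ne
  have hemb := hs.isOpenEmbedding_subtypeVal
  have hmap : IsOpenMap (Subtype.val : {y : Y // y ≠ p} → Y) := hemb.isOpenMap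
  have hcont : Continuous (Subtype.val : {y : Y // y ≠ p} → Y) := continuous_subtype_val
  have transfer : ∀ A : Set Y, A = closure (interior A) →
      (Subtype.val ⁻¹' A : Set {y : Y // y ≠ p}) =
        closure (interior (Subtype.val ⁻¹' A)) := by
    intro A hA
    rw [← hmap.preimage_interior_eq_interior_preimage hcont,
      ← hmap.preimage_closure_eq_closure_preimage hcont, ← hA]
  obtain ⟨U', V', hU'o, hV'o, hFU', hGV', hd'⟩ :=
    hrc (Subtype.val ⁻¹' F) (Subtype.val ⁻¹' G) (transfer F hF) (transfer G hG)
      (hd.preimage _)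
  refine ⟨Subtype.val '' U', Subtype.val '' V', hmap _ hU'o, hmap _ hV'o, ?_, ?_, ?_⟩
  · intro y hy
    have hyp : y ≠ p := fun h => hFp (h ▸ hy)
    exact ⟨⟨y, hyp⟩, hFU' hy, rfl⟩
  · intro y hy
    have hyp : y ≠ p := fun h => hGp (h ▸ hy)
    exact ⟨⟨y, hyp⟩, hGV' hy, rfl⟩
  · exact (Set.disjoint_image_iff Subtype.val_injective).2 hd'

/-- Separation of disjoint regular closed sets when `p ∉ G`. -/
lemma sep_weak'
    (hrc : ∀ F G : Set {y : Y // y ≠ p},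
      F = closure (interior F) → G = closure (interior G) → Disjoint F G →
      ∃ U V : Set {y : Y // y ≠ p},
        IsOpen U ∧ IsOpen V ∧ F ⊆ U ∧ G ⊆ V ∧ Disjoint U V)
    {F G : Set Y} (hF : F = closure (interior F)) (hG : G = closure (interior G))
    (hGp : p ∉ G) (hd : Disjoint F G) :
    ∃ U V : Set Y, IsOpen U ∧ IsOpen V ∧ F ⊆ U ∧ G ⊆ V ∧ Disjoint U V := by
  have hGc : IsClosed G := isClosed_of_rc hG
  -- a neighbourhood `W` of `p` with `closure W ⊆ Gᶜ`
  obtain ⟨t, ht, htc, hts⟩ := exists_mem_nhds_isClosed_subset (hGc.isOpen_compl.mem_nhds hGp)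
  set W : Set Y := interior t with hW
  have hWo : IsOpen W := isOpen_interior
  have hclW : closure W ⊆ Gᶜ := (closure_minimal interior_subset htc).trans hts
  have hpW : p ∈ W := mem_interior_iff_mem_nhds.2 ht
  -- a smaller neighbourhood `W1` of `p` with `closure W1 ⊆ W`
  obtain ⟨t1, ht1, htc1, hts1⟩ := exists_mem_nhds_isClosed_subset (hWo.mem_nhds hpW)
  set W1 : Set Y := interior t1 with hW1
  have hclW1 : closure W1 ⊆ W := (closure_minimal interior_subset htc1).trans hts1
  have hpW1 : p ∈ W1 := mem_interior_iff_mem_nhds.2 ht1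
  -- the part of `F` away from `p`
  set F₁ : Set Y := closure (interior F \ closure W1) with hF₁def
  have hO : IsOpen (interior F \ closure W1) := isOpen_interior.sdiff isClosed_closure
  have hF₁rc : F₁ = closure (interior F₁) := rc_closure_open hO
  have hF₁F : F₁ ⊆ F := by
    rw [hF]
    exact closure_mono diff_subset
  have hF₁p : p ∉ F₁ := by
    have hdj : Disjoint (interior F \ closure W1) W1 :=
      disjoint_left.2 fun y hy hy1 => hy.2 (subset_closure hy1)
    exact fun h => disjoint_left.1 (hdj.closure_left isOpen_interior) h hpW1
  -- `F` is covered by `F₁` and `W`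
  have hcover : F \ W ⊆ F₁ := by
    intro y hy
    have hyW1 : y ∉ closure W1 := fun h => hy.2 (hclW1 h)
    rw [mem_closure_iff]
    intro o ho hyo
    have hyF : y ∈ closure (interior F) := hF ▸ hy.1
    rcases mem_closure_iff.1 hyF (o ∩ (closure W1)ᶜ)
      (ho.inter isClosed_closure.isOpen_compl) ⟨hyo, hyW1⟩ with ⟨z, ⟨hz1, hz2⟩, hz3⟩
    exact ⟨z, hz1, hz3, hz2⟩
  -- separate `F₁` and `G` inside the subspace
  obtain ⟨U₁, V₁, hU₁o, hV₁o, hFU₁, hGV₁, hd₁⟩ :=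
    sep_away hrc hF₁rc hG hF₁p hGp (hd.mono_left hF₁F)
  refine ⟨U₁ ∪ W, V₁ \ closure W, hU₁o.union hWo, hV₁o.sdiff isClosed_closure, ?_, ?_, ?_⟩
  · intro y hy
    by_cases hyW : y ∈ W
    · exact Or.inr hyW
    · exact Or.inl (hFU₁ (hcover ⟨hy, hyW⟩))
  · intro y hy
    exact ⟨hGV₁ hy, fun h => hclW h hy⟩
  · rw [Set.disjoint_left]
    rintro y (hy | hy) ⟨hy1, hy2⟩
    · exact disjoint_left.1 hd₁ hy hy1
    · exact hy2 (subset_closure hy)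

/-- Separation of disjoint regular closed sets in `Y`. -/
lemma sep_weak
    (hrc : ∀ F G : Set {y : Y // y ≠ p},
      F = closure (interior F) → G = closure (interior G) → Disjoint F G →
      ∃ U V : Set {y : Y // y ≠ p},
        IsOpen U ∧ IsOpen V ∧ F ⊆ U ∧ G ⊆ V ∧ Disjoint U V)
    {F G : Set Y} (hF : F = closure (interior F)) (hG : G = closure (interior G))
    (hd : Disjoint F G) :
    ∃ U V : Set Y, IsOpen U ∧ IsOpen V ∧ F ⊆ U ∧ G ⊆ V ∧ Disjoint U V := by
  by_cases hGp : p ∈ G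
  · have hFp : p ∉ F := fun hFp => disjoint_left.1 hd hFp hGp
    obtain ⟨V, U, hVo, hUo, hGV, hFU, hd'⟩ := sep_weak' hrc hG hF hFp hd.symm
    exact ⟨U, V, hUo, hVo, hFU, hGV, hd'.symm⟩
  · exact sep_weak' hrc hF hG hGp hd

/-- Strong separation: disjoint regular closed sets have open neighbourhoods with disjoint
closures. -/
lemma sep_strong
    (hrc : ∀ F G : Set {y : Y // y ≠ p},
      F = closure (interior F) → G = closure (interior G) → Disjoint F G →
      ∃ U V : Set {y : Y // y ≠ p},
        IsOpen U ∧ IsOpen V ∧ F ⊆ U ∧ G ⊆ V ∧ Disjoint U V)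
    {F G : Set Y} (hF : F = closure (interior F)) (hG : G = closure (interior G))
    (hd : Disjoint F G) :
    ∃ U V : Set Y, IsOpen U ∧ IsOpen V ∧ F ⊆ U ∧ G ⊆ V ∧
      Disjoint (closure U) (closure V) := by
  obtain ⟨U, V, hUo, hVo, hFU, hGV, hd₀⟩ := sep_weak hrc hF hG hd
  have h1 : Disjoint F (closure V) := (hd₀.closure_right hUo).mono_left hFU
  obtain ⟨U₂, W₂, hU₂o, hW₂o, hFU₂, hVW₂, hd₂⟩ :=
    sep_weak hrc hF (rc_closure_open hVo) h1
  refine ⟨U₂, V, hU₂o, hVo, hFU₂, hGV, ?_⟩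
  exact (hd₂.closure_left hW₂o).mono_right ((closure_mono subset_closure).trans
    (by rw [closure_closure]; exact hVW₂))

/-- The interpolation property needed for the Urysohn-type construction. -/
lemma interpolation
    (hrc : ∀ F G : Set {y : Y // y ≠ p},
      F = closure (interior F) → G = closure (interior G) → Disjoint F G →
      ∃ U V : Set {y : Y // y ≠ p},
        IsOpen U ∧ IsOpen V ∧ F ⊆ U ∧ G ⊆ V ∧ Disjoint U V)
    {c u : Set Y} (hc : c = closure (interior c)) (hu : u = interior (closure u))
    (hcu : c ⊆ u) :
    ∃ v, v = interior (closure v) ∧ c ⊆ v ∧ closure v ⊆ u ∧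
      closure v = closure (interior (closure v)) := by
  have hGrc : uᶜ = closure (interior uᶜ) := rc_compl_ro hu
  have hdis : Disjoint c uᶜ := disjoint_left.2 fun y hy hyc => hyc (hcu hy)
  obtain ⟨U', V', hU'o, hV'o, hcU', huV', hd'⟩ := sep_strong hrc hc hGrc hdis
  refine ⟨interior (closure U'), ?_, ?_, ?_, ?_⟩
  · have hclv : closure (interior (closure U')) = closure U' := by
      apply subset_antisymm
      · exact closure_minimal interior_subset isClosed_closure
      · exact closure_mono (interior_maximal subset_closure hU'o)
    rw [hclv]
  · exact hcU'.trans (interior_maximal subset_closure hU'o)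
  · have hclv : closure (interior (closure U')) = closure U' := by
      apply subset_antisymm
      · exact closure_minimal interior_subset isClosed_closure
      · exact closure_mono (interior_maximal subset_closure hU'o)
    rw [hclv]
    intro y hy
    by_contra hyu
    exact disjoint_left.1 hd' hy (subset_closure (huV' hyu))
  · exact rc_closure_open isOpen_interior

end Sep



end OnePointRC


/-- Every regular T1 one-point extension of an rc-space is completely regular:
if `Y` is a regular T1 space, `p ∈ Y`, and the subspace `Y \ {p}` is an rc-space
(any two disjoint regular closed subsets have disjoint open neighbourhoods),
then `Y` is completely regular. -/
theorem one_point_extension_of_rc_completely_regular {Y : Type*} [TopologicalSpace Y]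
    [T1Space Y] [RegularSpace Y] (p : Y)
    (hrc : ∀ F G : Set {y : Y // y ≠ p},
      F = closure (interior F) → G = closure (interior G) → Disjoint F G →
      ∃ U V : Set {y : Y // y ≠ p},
        IsOpen U ∧ IsOpen V ∧ F ⊆ U ∧ G ⊆ V ∧ Disjoint U V) :
    CompletelyRegularSpace Y := by
  open OnePointRC Set in
  refine ⟨fun x K hK hxK => ?_⟩
  -- find a regular closed set `F` containing `x` and a regular closed set `G` containing `K`,
  -- disjoint from each other
  obtain ⟨t, ht, htc, hts⟩ := exists_mem_nhds_isClosed_subset (hK.isOpen_compl.mem_nhds hxK)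
  set U : Set Y := interior t with hU
  have hUo : IsOpen U := isOpen_interior
  have hclU : closure U ⊆ Kᶜ := (closure_minimal interior_subset htc).trans hts
  obtain ⟨t', ht', htc', hts'⟩ := exists_mem_nhds_isClosed_subset (hUo.mem_nhds
    (mem_interior_iff_mem_nhds.2 ht))
  set F : Set Y := closure (interior t') with hFdef
  have hFrc : F = closure (interior F) := rc_closure_open isOpen_interior
  have hxF : x ∈ F := subset_closure (mem_interior_iff_mem_nhds.2 ht')
  have hFU : F ⊆ U := (closure_minimal interior_subset htc').trans hts'
  set G : Set Y := closure ((closure U)ᶜ) with hGdef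
  have hGrc : G = closure (interior G) := rc_closure_open isClosed_closure.isOpen_compl
  have hKG : K ⊆ G := fun y hy => subset_closure (fun h => hclU h hy)
  have hdFG : Disjoint F G := by
    have : Disjoint U ((closure U)ᶜ) := disjoint_left.2 fun y hy hyc => hyc (subset_closure hy)
    exact (this.closure_right hUo).mono_left hFU
  -- run the Urysohn-type construction
  set c : OnePointRC.RCU Y :=
    { C := F
      U := Gᶜ
      rc_C := hFrc
      ro_U := ro_compl_rc hGrc
      subset := fun y hy hyG => disjoint_left.1 hdFG hy hyG
      hP := fun {a b} ha hb hab => interpolation hrc ha hb hab }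
  refine ⟨fun y => ⟨c.lim y, c.lim_mem_Icc y⟩, ?_, ?_, ?_⟩
  · exact Continuous.subtype_mk c.continuous_lim _
  · exact Subtype.ext (c.lim_of_mem_C x hxF)
  · intro y hy
    exact Subtype.ext (c.lim_of_nmem_U y (fun h => h (hKG hy)))
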